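/- Let H be a Hopf algebra with invertible antipode and B a braided-commutative Yetter–Drinfeld H-module algebra. For finite-dimensional left H-comodules V, W, the map T : (W ⊗ B) ⊗_B (V ⊗ B) → (V ⊗ W) ⊗ B given by (ζ ⊗ b) ⊗ (ξ ⊗ a) ↦ ξ₍₂₎ ⊗ ζ ⊗ (S⁻¹(ξ₍₁₎) ▷ b) a is a well-defined isomorphism of right B-modules, with inverse determined by ξ ⊗ ζ ⊗ a ↦ (ζ ⊗ 1) ⊗ (ξ ⊗ a). -/

import Mathlib

set_option synthInstance.maxHeartbeats 1000000
set_option maxHeartbeats 4000000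


open TensorProduct LinearMap

noncomputable section

variable (k H B : Type) [Field k]
variable [Ring H] [HopfAlgebra k H] [Ring B] [Algebra k B]

/-- The lifted action map `H ⊗ B → B`. -/
def actT (act : H →ₗ[k] B →ₗ[k] B) : H ⊗[k] B →ₗ[k] B := TensorProduct.lift act

/-- `(Δ x) ⊗ (a ⊗ b) ↦ (x₍₁₎ ▷ a)(x₍₂₎ ▷ b)`. -/
def maMap (act : H →ₗ[k] B →ₗ[k] B) : (H ⊗[k] H) ⊗[k] (B ⊗[k] B) →ₗ[k] B :=
  (LinearMap.mul' k B) ∘ₗ (TensorProduct.map (actT k H B act) (actT k H B act)) ∘ₗ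
    (TensorProduct.tensorTensorTensorComm k H H B B).toLinearMap

/-- `a ⊗ b ↦ b₍₂₎ (S⁻¹(b₍₁₎) ▷ a)`. -/
def braid (act : H →ₗ[k] B →ₗ[k] B) (Sinv : H →ₗ[k] H) (coact : B →ₗ[k] H ⊗[k] B) :
    B ⊗[k] B →ₗ[k] B :=
  (LinearMap.mul' k B) ∘ₗ (TensorProduct.comm k B B).toLinearMap
    ∘ₗ (TensorProduct.map (actT k H B act) LinearMap.id)
    ∘ₗ (TensorProduct.map (TensorProduct.map Sinv LinearMap.id) LinearMap.id)
    ∘ₗ (TensorProduct.map (TensorProduct.comm k B H).toLinearMap LinearMap.id)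
    ∘ₗ (TensorProduct.assoc k B H B).symm.toLinearMap
    ∘ₗ (TensorProduct.map LinearMap.id coact)

/-- `x ↦ x₍₁₎ ⊗ (x₍₂₎ ⊗ x₍₃₎)`. -/
def comul₂ : H →ₗ[k] H ⊗[k] (H ⊗[k] H) :=
  (TensorProduct.map LinearMap.id Coalgebra.comul) ∘ₗ Coalgebra.comul

/-- `(x₍₂₎ ⊗ x₍₃₎) ⊗ a₍₂₎ ↦ S(x₍₃₎) ⊗ (x₍₂₎ ▷ a₍₂₎)`. -/
def innerYD (act : H →ₗ[k] B →ₗ[k] B) : (H ⊗[k] H) ⊗[k] B →ₗ[k] H ⊗[k] B :=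
  (TensorProduct.map (HopfAlgebra.antipode (R := k)) (actT k H B act))
    ∘ₗ (TensorProduct.assoc k H H B).toLinearMap
    ∘ₗ (TensorProduct.map (TensorProduct.comm k H H).toLinearMap LinearMap.id)

/-- `x ⊗ a ↦ x₍₁₎ a₍₁₎ S(x₍₃₎) ⊗ (x₍₂₎ ▷ a₍₂₎)`, the right-hand side of the
Yetter–Drinfeld compatibility condition. -/
def rhsYD (act : H →ₗ[k] B →ₗ[k] B) (coact : B →ₗ[k] H ⊗[k] B) :
    H ⊗[k] B →ₗ[k] H ⊗[k] B :=
  (TensorProduct.map (LinearMap.mul' k H) LinearMap.id)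
    ∘ₗ (TensorProduct.assoc k H H B).symm.toLinearMap
    ∘ₗ (TensorProduct.map (LinearMap.mul' k H) (innerYD k H B act))
    ∘ₗ (TensorProduct.tensorTensorTensorComm k H (H ⊗[k] H) H B).toLinearMap
    ∘ₗ (TensorProduct.map (comul₂ k H) coact)

variable {k H B} in
/-- A braided-commutative Yetter–Drinfeld algebra structure on `B` over the Hopf
algebra `H` (with invertible antipode `Sinv`): `B` is a left `H`-module algebra
(action `act`), a left `H`-comodule algebra (coaction `coact`), the Yetter–Drinfeld
compatibility holds, and braided commutativity `a b = b₍₂₎ (S⁻¹(b₍₁₎) ▷ a)` holds. -/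
structure BraidedCommYD (act : H →ₗ[k] B →ₗ[k] B) (coact : B →ₗ[k] H ⊗[k] B)
    (Sinv : H →ₗ[k] H) : Prop where
  Sinv_antipode : ∀ x : H, Sinv (HopfAlgebra.antipode (R := k) x) = x
  antipode_Sinv : ∀ x : H, HopfAlgebra.antipode (R := k) (Sinv x) = x
  act_unit : ∀ a : B, act 1 a = a
  act_mulH : ∀ (x y : H) (a : B), act (x * y) a = act x (act y a)
  act_one : ∀ x : H, act x 1 = Coalgebra.counit (R := k) x • (1 : B)
  act_mul : ∀ (x : H) (a b : B),
    act x (a * b) = maMap k H B act (Coalgebra.comul x ⊗ₜ[k] (a ⊗ₜ[k] b))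
  coact_one : coact 1 = 1
  coact_mul : ∀ a b : B, coact (a * b) = coact a * coact b
  coact_coassoc : ∀ a : B,
    (TensorProduct.map Coalgebra.comul LinearMap.id) (coact a)
      = (TensorProduct.assoc k H H B).symm ((TensorProduct.map LinearMap.id coact) (coact a))
  coact_counit : ∀ a : B,
    (TensorProduct.lid k B) ((TensorProduct.map (Coalgebra.counit (R := k)) LinearMap.id) (coact a)) = a
  yd : ∀ (x : H) (a : B), coact (act x a) = rhsYD k H B act coact (x ⊗ₜ[k] a)
  braided : ∀ a b : B, a * b = braid k H B act Sinv coact (a ⊗ₜ[k] b)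


section AuxHopf

variable {k H}

local notation "S" => HopfAlgebra.antipode (R := k) (A := H)
local notation "ε" => Coalgebra.counit (R := k)
local notation "Δ" => Coalgebra.comul (R := k)

lemma repr_sum_right {y : H} (s : Coalgebra.Repr k y (H × H)) :
    ∑ i ∈ s.index, ε (s.left i) • s.right i = y := by
  have h := congrArg (TensorProduct.lid k H) (Coalgebra.sum_counit_tmul_eq s)
  simp only [map_sum, TensorProduct.lid_tmul, one_smul] at h
  exact h

lemma repr_sum_left {y : H} (s : Coalgebra.Repr k y (H × H)) :
    ∑ i ∈ s.index, ε (s.right i) • s.left i = y := by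
  have h := congrArg (TensorProduct.rid k H) (Coalgebra.sum_tmul_counit_eq s)
  simp only [map_sum, TensorProduct.rid_tmul, one_smul] at h
  exact h

lemma my_counit_antipode (x : H) : ε (S x) = ε x := by
  have r := Coalgebra.Repr.arbitrary k x
  have h2 := congrArg ε (HopfAlgebra.sum_antipode_mul_eq_algebraMap_counit (R := k) r)
  simp only [map_sum, Bialgebra.counit_mul, Bialgebra.counit_algebraMap] at h2
  calc ε (S x) = ε (S (∑ i ∈ r.index, ε (r.right i) • r.left i)) := by rw [repr_sum_left]
    _ = ∑ i ∈ r.index, ε (S (r.left i)) * ε (r.right i) := by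
        simp [map_sum, map_smul, smul_eq_mul, mul_comm]
    _ = ε x := h2

/-- `g = (S ⊗ S) ∘ comm ∘ Δ`. -/
def gMap : H →ₗ[k] H ⊗[k] H :=
  (TensorProduct.map S S) ∘ₗ (TensorProduct.comm k H H).toLinearMap ∘ₗ Coalgebra.comul

/-- `f = Δ ∘ S`. -/
def fMap : H →ₗ[k] H ⊗[k] H := Coalgebra.comul ∘ₗ S

lemma gMap_apply (x : H) :
    gMap (k := k) (H := H) x = (TensorProduct.map S S) ((TensorProduct.comm k H H) (Δ x)) := rfl

-- (c1) : ∑ Δ(lᵢ) * Δ(S rᵢ) = ε y • 1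
lemma conv_comul_f {y : H} (s : Coalgebra.Repr k y (H × H)) :
    ∑ i ∈ s.index, (Δ (s.left i)) * (Δ (S (s.right i))) = ε y • (1 : H ⊗[k] H) := by
  have : ∀ i, (Δ (s.left i)) * (Δ (S (s.right i))) = Δ (s.left i * S (s.right i)) := by
    intro i; rw [Bialgebra.comul_mul]
  rw [Finset.sum_congr rfl (fun i _ => this i), ← map_sum,
    HopfAlgebra.sum_mul_antipode_eq_algebraMap_counit (R := k) s, Bialgebra.comul_algebraMap,
    Algebra.algebraMap_eq_smul_one]

-- (c2) inner step: Φ u (Δ w) = 1 ⊗ₜ (S u * w)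
lemma phi_comul (u w : H) :
    (LinearMap.mul' k (H ⊗[k] H) ∘ₗ
      TensorProduct.map (((TensorProduct.mk k H H).flip (S u)) ∘ₗ S) Coalgebra.comul) (Δ w)
      = (1 : H) ⊗ₜ[k] (S u * w) := by
  set g' : H →ₗ[k] H ⊗[k] H := ((TensorProduct.mk k H H).flip (S u)) ∘ₗ S with hg'
  set Φ : H ⊗[k] H →ₗ[k] H ⊗[k] H := LinearMap.mul' k (H ⊗[k] H) ∘ₗ TensorProduct.map g' Coalgebra.comul with hΦ
  set Ξ : H ⊗[k] (H ⊗[k] H) →ₗ[k] H ⊗[k] H :=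
    LinearMap.mul' k (H ⊗[k] H) ∘ₗ TensorProduct.map g' LinearMap.id with hΞ
  have hfac : Φ (Δ w) = Ξ ((Coalgebra.comul (R := k)).lTensor H (Δ w)) := by
    have : Φ = Ξ ∘ₗ (Coalgebra.comul (R := k)).lTensor H := by
      apply TensorProduct.ext'
      intro a b
      simp [hΦ, hΞ]
    rw [this]; rfl
  rw [show Φ (Δ w) = Φ (Δ w) from rfl] at hfac
  have hco : (Coalgebra.comul (R := k)).lTensor H (Δ w)
      = TensorProduct.assoc k H H H ((Coalgebra.comul (R := k)).rTensor H (Δ w)) :=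
    (Coalgebra.coassoc_apply w).symm
  set p := Coalgebra.Repr.arbitrary k w with hp
  have hrT : (Coalgebra.comul (R := k)).rTensor H (Δ w)
      = ∑ j ∈ p.index, (Δ (p.left j)) ⊗ₜ[k] (p.right j) := by
    rw [← p.eq, map_sum]; simp
  have hterm : ∀ j, Ξ (TensorProduct.assoc k H H H ((Δ (p.left j)) ⊗ₜ[k] (p.right j)))
      = algebraMap k H (ε (p.left j)) ⊗ₜ[k] (S u * p.right j) := by
    intro j
    have key : ∀ t : H ⊗[k] H, Ξ (TensorProduct.assoc k H H H (t ⊗ₜ[k] (p.right j)))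
        = (LinearMap.mul' k H ((S).rTensor H t)) ⊗ₜ[k] (S u * p.right j) := by
      intro t
      induction t using TensorProduct.induction_on with
      | zero =>
          simp only [TensorProduct.zero_tmul, LinearEquiv.map_zero, map_zero]
      | tmul a b =>
          simp [hΞ, hg', TensorProduct.mk_apply, Algebra.TensorProduct.tmul_mul_tmul]
      | add t₁ t₂ ih₁ ih₂ =>
          simp only [TensorProduct.add_tmul, LinearEquiv.map_add, map_add, ih₁, ih₂]
    rw [key, HopfAlgebra.mul_antipode_rTensor_comul_apply]
  calc Φ (Δ w) = Ξ (TensorProduct.assoc k H H H ((Coalgebra.comul (R := k)).rTensor H (Δ w))) := by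
        rw [hfac, hco]
    _ = ∑ j ∈ p.index, algebraMap k H (ε (p.left j)) ⊗ₜ[k] (S u * p.right j) := by
        rw [hrT, map_sum, map_sum]
        exact Finset.sum_congr rfl (fun j _ => hterm j)
    _ = (1 : H) ⊗ₜ[k] (S u * w) := by
        have : ∀ j, (algebraMap k H (ε (p.left j)) : H) ⊗ₜ[k] (S u * p.right j)
            = (1 : H) ⊗ₜ[k] (S u * (ε (p.left j) • p.right j)) := by
          intro j
          rw [Algebra.algebraMap_eq_smul_one, TensorProduct.smul_tmul, mul_smul_comm]
        rw [Finset.sum_congr rfl (fun j _ => this j), ← TensorProduct.tmul_sum,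
          ← Finset.mul_sum, repr_sum_right p]

-- (c2) : ∑ g(lᵢ) * Δ(rᵢ) = ε y • 1
lemma conv_g_comul {y : H} (s : Coalgebra.Repr k y (H × H)) :
    ∑ i ∈ s.index, (gMap (k := k) (H := H) (s.left i)) * (Δ (s.right i))
      = ε y • (1 : H ⊗[k] H) := by
  set Θ : (H ⊗[k] H) ⊗[k] H →ₗ[k] H ⊗[k] H :=
    LinearMap.mul' k (H ⊗[k] H) ∘ₗ
      TensorProduct.map ((TensorProduct.map S S) ∘ₗ (TensorProduct.comm k H H).toLinearMap)
        Coalgebra.comul with hΘ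
  have step1 : ∀ i, (gMap (k := k) (H := H) (s.left i)) * (Δ (s.right i))
      = Θ ((Δ (s.left i)) ⊗ₜ[k] (s.right i)) := by
    intro i; simp [hΘ, gMap]
  have h2 : ∑ i ∈ s.index, (Δ (s.left i)) ⊗ₜ[k] (s.right i)
      = (Coalgebra.comul (R := k)).rTensor H (Δ y) := by
    rw [← s.eq, map_sum]; simp
  have h3 : (Coalgebra.comul (R := k)).rTensor H (Δ y)
      = (TensorProduct.assoc k H H H).symm ((Coalgebra.comul (R := k)).lTensor H (Δ y)) :=
    (Coalgebra.coassoc_symm_apply y).symm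
  have h4 : (Coalgebra.comul (R := k)).lTensor H (Δ y)
      = ∑ i ∈ s.index, (s.left i) ⊗ₜ[k] (Δ (s.right i)) := by
    rw [← s.eq, map_sum]; simp
  have key' : ∀ (u : H) (t : H ⊗[k] H),
      Θ ((TensorProduct.assoc k H H H).symm (u ⊗ₜ[k] t))
        = (LinearMap.mul' k (H ⊗[k] H) ∘ₗ
            TensorProduct.map (((TensorProduct.mk k H H).flip (S u)) ∘ₗ S) Coalgebra.comul) t := by
    intro u t
    induction t using TensorProduct.induction_on with
    | zero => simp only [TensorProduct.tmul_zero, LinearEquiv.map_zero, map_zero]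
    | tmul a b => simp [hΘ, TensorProduct.mk_apply]
    | add t₁ t₂ ih₁ ih₂ =>
        simp only [TensorProduct.tmul_add, LinearEquiv.map_add, map_add, ih₁, ih₂]
  calc ∑ i ∈ s.index, (gMap (k := k) (H := H) (s.left i)) * (Δ (s.right i))
      = Θ (∑ i ∈ s.index, (Δ (s.left i)) ⊗ₜ[k] (s.right i)) := by
        rw [map_sum]; exact Finset.sum_congr rfl (fun i _ => step1 i)
    _ = Θ ((TensorProduct.assoc k H H H).symm (∑ i ∈ s.index, (s.left i) ⊗ₜ[k] (Δ (s.right i)))) := by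
        rw [h2, h3, h4]
    _ = ∑ i ∈ s.index, (1 : H) ⊗ₜ[k] (S (s.left i) * s.right i) := by
        simp only [map_sum]
        refine Finset.sum_congr rfl (fun i _ => ?_)
        rw [key', phi_comul]
    _ = ε y • (1 : H ⊗[k] H) := by
        rw [← TensorProduct.tmul_sum, HopfAlgebra.sum_antipode_mul_eq_algebraMap_counit (R := k) s,
          Algebra.algebraMap_eq_smul_one, TensorProduct.tmul_smul,
          Algebra.TensorProduct.one_def]

lemma fMap_eq_gMap : (fMap : H →ₗ[k] H ⊗[k] H) = gMap (k := k) := by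
  ext x
  set L := H ⊗[k] H
  set μ : H ⊗[k] (H ⊗[k] H) →ₗ[k] L :=
    LinearMap.mul' k L ∘ₗ
      TensorProduct.map (gMap (k := k)) (LinearMap.mul' k L ∘ₗ
        TensorProduct.map Coalgebra.comul (fMap (k := k))) with hμ
  have hμ_apply : ∀ (a c d : H), μ (a ⊗ₜ[k] (c ⊗ₜ[k] d)) = gMap (k := k) a * ((Δ c) * fMap (k := k) d) := by
    intro a c d; simp [hμ]
  set r := Coalgebra.Repr.arbitrary k x with hr
  set rL := fun i => Coalgebra.Repr.arbitrary k (r.left i) with hrL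
  set rR := fun i => Coalgebra.Repr.arbitrary k (r.right i) with hrR
  have key := congrArg μ (Coalgebra.sum_tmul_tmul_eq (R := k) r rL rR)
  simp only [map_sum, hμ_apply] at key
  have hL : ∑ i ∈ r.index, ∑ j ∈ (rL i).index,
      gMap (k := k) ((rL i).left j) * ((Δ ((rL i).right j)) * fMap (k := k) (r.right i))
      = fMap (k := k) x := by
    have inner : ∀ i, ∑ j ∈ (rL i).index,
        gMap (k := k) ((rL i).left j) * ((Δ ((rL i).right j)) * fMap (k := k) (r.right i))
        = ε (r.left i) • fMap (k := k) (r.right i) := by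
      intro i
      rw [show ∀ (f : (rL i).ι → L) (C : L), (∑ j ∈ (rL i).index, f j * ((Δ ((rL i).right j)) * C))
            = ∑ j ∈ (rL i).index, (f j * (Δ ((rL i).right j))) * C from
          fun f C => Finset.sum_congr rfl (fun j _ => (mul_assoc _ _ _).symm),
        ← Finset.sum_mul, conv_g_comul (rL i), smul_mul_assoc, one_mul]
    rw [Finset.sum_congr rfl (fun i _ => inner i)]
    rw [show ∑ i ∈ r.index, ε (r.left i) • fMap (k := k) (r.right i)
        = fMap (k := k) (∑ i ∈ r.index, ε (r.left i) • r.right i) by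
      rw [map_sum]; exact Finset.sum_congr rfl (fun i _ => (map_smul _ _ _).symm)]
    rw [repr_sum_right r]
  have hR : ∑ i ∈ r.index, ∑ j ∈ (rR i).index,
      gMap (k := k) (r.left i) * ((Δ ((rR i).left j)) * fMap (k := k) ((rR i).right j))
      = gMap (k := k) x := by
    have inner : ∀ i, ∑ j ∈ (rR i).index,
        gMap (k := k) (r.left i) * ((Δ ((rR i).left j)) * fMap (k := k) ((rR i).right j))
        = ε (r.right i) • gMap (k := k) (r.left i) := by
      intro i
      rw [← Finset.mul_sum]
      have : ∑ j ∈ (rR i).index, (Δ ((rR i).left j)) * fMap (k := k) ((rR i).right j)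
          = ε (r.right i) • (1 : L) := conv_comul_f (rR i)
      rw [this, mul_smul_comm, mul_one]
    rw [Finset.sum_congr rfl (fun i _ => inner i)]
    rw [show ∑ i ∈ r.index, ε (r.right i) • gMap (k := k) (r.left i)
        = gMap (k := k) (∑ i ∈ r.index, ε (r.right i) • r.left i) by
      rw [map_sum]; exact Finset.sum_congr rfl (fun i _ => (map_smul _ _ _).symm)]
    rw [repr_sum_left r]
  rw [hL, hR] at key
  exact key

lemma my_comul_antipode (x : H) :
    Δ (S x) = (TensorProduct.map S S) ((TensorProduct.comm k H H) (Δ x)) := by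
  have := LinearMap.congr_fun (fMap_eq_gMap (k := k) (H := H)) x
  simpa [fMap, gMap] using this

lemma my_counit_Sinv (Sinv : H →ₗ[k] H) (h2 : ∀ x : H, S (Sinv x) = x) (x : H) :
    ε (Sinv x) = ε x := by
  have := my_counit_antipode (k := k) (Sinv x)
  rw [h2 x] at this
  exact this.symm

lemma my_comul_Sinv (Sinv : H →ₗ[k] H) (h1 : ∀ x : H, Sinv (S x) = x)
    (h2 : ∀ x : H, S (Sinv x) = x) (x : H) :
    Δ (Sinv x) = (TensorProduct.map Sinv Sinv) ((TensorProduct.comm k H H) (Δ x)) := by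
  have base := my_comul_antipode (k := k) (Sinv x)
  rw [h2 x] at base
  have cancel : ∀ t : H ⊗[k] H, (TensorProduct.map Sinv Sinv) ((TensorProduct.map S S) t) = t := by
    intro t
    induction t using TensorProduct.induction_on with
    | zero => simp
    | tmul a b => simp [h1]
    | add t₁ t₂ ih₁ ih₂ => simp [ih₁, ih₂]
  have swap : ∀ t : H ⊗[k] H, (TensorProduct.comm k H H) ((TensorProduct.map Sinv Sinv) t)
      = (TensorProduct.map Sinv Sinv) ((TensorProduct.comm k H H) t) := by
    intro t
    induction t using TensorProduct.induction_on with
    | zero => simp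
    | tmul a b => simp
    | add t₁ t₂ ih₁ ih₂ => simp [ih₁, ih₂]
  have h3 : (TensorProduct.comm k H H) (Δ (Sinv x))
      = (TensorProduct.map Sinv Sinv) (Δ x) := by
    rw [base, cancel]
  have cc : ∀ t : H ⊗[k] H, (TensorProduct.comm k H H) ((TensorProduct.comm k H H) t) = t := by
    intro t
    induction t using TensorProduct.induction_on with
    | zero => simp
    | tmul a b => simp
    | add t₁ t₂ ih₁ ih₂ => simp [ih₁, ih₂]
  have h4 := congrArg (TensorProduct.comm k H H) h3
  rw [swap, cc] at h4
  exact h4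


end AuxHopf

variable (V W : Type) [AddCommGroup V] [Module k V] [AddCommGroup W] [Module k W]

/-- `a ⊗ (h ⊗ b) ↦ (S⁻¹(h) ▷ a) b`. -/
def innerPi (act : H →ₗ[k] B →ₗ[k] B) (Sinv : H →ₗ[k] H) :
    B ⊗[k] (H ⊗[k] B) →ₗ[k] B :=
  (LinearMap.mul' k B)
    ∘ₗ (TensorProduct.map (actT k H B act) LinearMap.id)
    ∘ₗ (TensorProduct.map (TensorProduct.comm k B H).toLinearMap LinearMap.id)
    ∘ₗ (TensorProduct.assoc k B H B).symm.toLinearMap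
    ∘ₗ (TensorProduct.map LinearMap.id (TensorProduct.map Sinv LinearMap.id))

/-- The left `B`-action `π(a)(ξ ⊗ b) = ξ₍₂₎ ⊗ (S⁻¹(ξ₍₁₎) ▷ a) b` on the relative Hopf
module `V ⊗ B`, as a map `B ⊗ (V ⊗ B) → V ⊗ B`. -/
def piMap (act : H →ₗ[k] B →ₗ[k] B) (Sinv : H →ₗ[k] H)
    (coactV : V →ₗ[k] H ⊗[k] V) : B ⊗[k] (V ⊗[k] B) →ₗ[k] V ⊗[k] B :=
  (TensorProduct.map LinearMap.id (innerPi k H B act Sinv))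
    ∘ₗ (TensorProduct.leftComm k B V (H ⊗[k] B)).toLinearMap
    ∘ₗ (TensorProduct.map LinearMap.id (TensorProduct.assoc k V H B).toLinearMap)
    ∘ₗ (TensorProduct.map LinearMap.id
          (TensorProduct.map (TensorProduct.comm k H V).toLinearMap LinearMap.id))
    ∘ₗ (TensorProduct.map LinearMap.id (TensorProduct.map coactV LinearMap.id))

/-- The map `π : B → End(V ⊗ B)`, `π(a)(ξ ⊗ b) = ξ₍₂₎ ⊗ (S⁻¹(ξ₍₁₎) ▷ a) b`. -/
def piAct (act : H →ₗ[k] B →ₗ[k] B) (Sinv : H →ₗ[k] H)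
    (coactV : V →ₗ[k] H ⊗[k] V) : B →ₗ[k] (V ⊗[k] B) →ₗ[k] (V ⊗[k] B) :=
  TensorProduct.curry (piMap k H B V act Sinv coactV)

/-- `h ⊗ (b ⊗ a) ↦ (S⁻¹(h) ▷ b) a`. -/
def innerTT (act : H →ₗ[k] B →ₗ[k] B) (Sinv : H →ₗ[k] H) :
    H ⊗[k] (B ⊗[k] B) →ₗ[k] B :=
  (LinearMap.mul' k B)
    ∘ₗ (TensorProduct.map (actT k H B act) LinearMap.id)
    ∘ₗ (TensorProduct.assoc k H B B).symm.toLinearMap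
    ∘ₗ (TensorProduct.map Sinv LinearMap.id)

/-- `ζ ⊗ (h ⊗ ξ) ↦ (ξ ⊗ ζ) ⊗ h`. -/
def rearrangeTT : W ⊗[k] (H ⊗[k] V) →ₗ[k] (V ⊗[k] W) ⊗[k] H :=
  (TensorProduct.comm k H (V ⊗[k] W)).toLinearMap
    ∘ₗ (TensorProduct.map LinearMap.id (TensorProduct.comm k W V).toLinearMap)
    ∘ₗ (TensorProduct.leftComm k W H V).toLinearMap

/-- The map `T : (W ⊗ B) ⊗ (V ⊗ B) → (V ⊗ W) ⊗ B`,
`(ζ ⊗ b) ⊗ (ξ ⊗ a) ↦ ξ₍₂₎ ⊗ ζ ⊗ (S⁻¹(ξ₍₁₎) ▷ b) a`. -/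
def ttMap (act : H →ₗ[k] B →ₗ[k] B) (Sinv : H →ₗ[k] H)
    (coactV : V →ₗ[k] H ⊗[k] V) :
    (W ⊗[k] B) ⊗[k] (V ⊗[k] B) →ₗ[k] (V ⊗[k] W) ⊗[k] B :=
  (TensorProduct.map LinearMap.id (innerTT k H B act Sinv))
    ∘ₗ (TensorProduct.assoc k (V ⊗[k] W) H (B ⊗[k] B)).toLinearMap
    ∘ₗ (TensorProduct.map (rearrangeTT k H V W) LinearMap.id)
    ∘ₗ (TensorProduct.tensorTensorTensorComm k W B (H ⊗[k] V) B).toLinearMap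
    ∘ₗ (TensorProduct.map LinearMap.id (TensorProduct.map coactV LinearMap.id))


section AuxMaps

variable {k H B V W}

/-- `h ⊗ v ↦ (v ⊗ ζ) ⊗ ((S⁻¹(h) ▷ b) a)`. -/
def tres (act : H →ₗ[k] B →ₗ[k] B) (Sinv : H →ₗ[k] H) (ζ : W) (b a : B) :
    H ⊗[k] V →ₗ[k] (V ⊗[k] W) ⊗[k] B :=
  TensorProduct.map ((TensorProduct.mk k V W).flip ζ)
      ((LinearMap.mulRight k a) ∘ₗ (act.flip b) ∘ₗ Sinv)
    ∘ₗ (TensorProduct.comm k H V).toLinearMap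

@[simp] lemma tres_tmul (act : H →ₗ[k] B →ₗ[k] B) (Sinv : H →ₗ[k] H) (ζ : W) (b a : B)
    (h : H) (v : V) :
    tres act Sinv ζ b a (h ⊗ₜ[k] v) = (v ⊗ₜ[k] ζ) ⊗ₜ[k] (act (Sinv h) b * a) := by
  simp [tres]

/-- `h ⊗ v ↦ v ⊗ ((S⁻¹(h) ▷ c) a)`. -/
def pres (act : H →ₗ[k] B →ₗ[k] B) (Sinv : H →ₗ[k] H) (c a : B) :
    H ⊗[k] V →ₗ[k] V ⊗[k] B :=
  TensorProduct.map LinearMap.id ((LinearMap.mulRight k a) ∘ₗ (act.flip c) ∘ₗ Sinv)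
    ∘ₗ (TensorProduct.comm k H V).toLinearMap

@[simp] lemma pres_tmul (act : H →ₗ[k] B →ₗ[k] B) (Sinv : H →ₗ[k] H) (c a : B)
    (h : H) (v : V) :
    pres act Sinv c a (h ⊗ₜ[k] v) = v ⊗ₜ[k] (act (Sinv h) c * a) := by
  simp [pres]

lemma ttMap_tmul (act : H →ₗ[k] B →ₗ[k] B) (Sinv : H →ₗ[k] H) (coactV : V →ₗ[k] H ⊗[k] V)
    (ζ : W) (b : B) (ξ : V) (a : B) :
    ttMap k H B V W act Sinv coactV ((ζ ⊗ₜ[k] b) ⊗ₜ[k] (ξ ⊗ₜ[k] a))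
      = tres act Sinv ζ b a (coactV ξ) := by
  unfold ttMap
  simp only [LinearMap.comp_apply, TensorProduct.map_tmul, LinearMap.id_coe, id_eq]
  generalize coactV ξ = t
  induction t using TensorProduct.induction_on with
  | zero => simp
  | tmul h v =>
      simp [rearrangeTT, innerTT, actT, TensorProduct.tensorTensorTensorComm_tmul,
        TensorProduct.leftComm_tmul]
  | add t₁ t₂ ih₁ ih₂ =>
      simp only [TensorProduct.add_tmul, TensorProduct.tmul_add, map_add, LinearEquiv.map_add,
        ih₁, ih₂]

lemma piMap_tmul (act : H →ₗ[k] B →ₗ[k] B) (Sinv : H →ₗ[k] H) (coactV : V →ₗ[k] H ⊗[k] V)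
    (c : B) (ξ : V) (a : B) :
    piMap k H B V act Sinv coactV (c ⊗ₜ[k] (ξ ⊗ₜ[k] a)) = pres act Sinv c a (coactV ξ) := by
  unfold _root_.piMap
  simp only [LinearMap.comp_apply, TensorProduct.map_tmul, LinearMap.id_coe, id_eq]
  generalize coactV ξ = t
  induction t using TensorProduct.induction_on with
  | zero => simp
  | tmul h v =>
      simp [innerPi, actT, TensorProduct.leftComm_tmul]
  | add t₁ t₂ ih₁ ih₂ =>
      simp only [TensorProduct.add_tmul, TensorProduct.tmul_add, map_add, LinearEquiv.map_add,
        ih₁, ih₂]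

end AuxMaps

/-- Let `H` be a Hopf algebra with invertible antipode and `B` a
braided-commutative Yetter–Drinfeld `H`-module algebra.  For finite-dimensional left
`H`-comodules `V, W`, the map `T : (W ⊗ B) ⊗_B (V ⊗ B) → (V ⊗ W) ⊗ B`,
`(ζ ⊗ b) ⊗ (ξ ⊗ a) ↦ ξ₍₂₎ ⊗ ζ ⊗ (S⁻¹(ξ₍₁₎) ▷ b) a`, is a well-defined isomorphism of
right `B`-modules, with inverse determined by `ξ ⊗ ζ ⊗ a ↦ (ζ ⊗ 1) ⊗ (ξ ⊗ a)`:
`T` kills the balancing relations (so it descends to the tensor product over `B`), the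
descended map is bijective, `T` is right `B`-linear, and `T((ζ ⊗ 1) ⊗ (ξ ⊗ a)) = (ξ ⊗ ζ) ⊗ a`. -/
theorem ttMap_isomorphism
    [FiniteDimensional k V] [FiniteDimensional k W]
    (act : H →ₗ[k] B →ₗ[k] B) (coact : B →ₗ[k] H ⊗[k] B) (Sinv : H →ₗ[k] H)
    (hYD : BraidedCommYD act coact Sinv)
    (coactV : V →ₗ[k] H ⊗[k] V)
    (coactV_coassoc : ∀ v : V,
      (TensorProduct.map Coalgebra.comul LinearMap.id) (coactV v)
        = (TensorProduct.assoc k H H V).symm ((TensorProduct.map LinearMap.id coactV) (coactV v)))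
    (coactV_counit : ∀ v : V,
      (TensorProduct.lid k V)
        ((TensorProduct.map (Coalgebra.counit (R := k)) LinearMap.id) (coactV v)) = v)
    (coactW : W →ₗ[k] H ⊗[k] W)
    (coactW_coassoc : ∀ w : W,
      (TensorProduct.map Coalgebra.comul LinearMap.id) (coactW w)
        = (TensorProduct.assoc k H H W).symm ((TensorProduct.map LinearMap.id coactW) (coactW w)))
    (coactW_counit : ∀ w : W,
      (TensorProduct.lid k W)
        ((TensorProduct.map (Coalgebra.counit (R := k)) LinearMap.id) (coactW w)) = w) :
    ∃ hker : Submodule.span k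
        {z : (W ⊗[k] B) ⊗[k] (V ⊗[k] B) |
          ∃ (w : W ⊗[k] B) (c : B) (v : V ⊗[k] B),
            z = ((TensorProduct.map LinearMap.id (LinearMap.mulRight k c)) w) ⊗ₜ[k] v
                - w ⊗ₜ[k] (piAct k H B V act Sinv coactV c v)}
        ≤ LinearMap.ker (ttMap k H B V W act Sinv coactV),
      -- the induced map on the balanced tensor product over `B` is bijective
      Function.Bijective (Submodule.liftQ _ (ttMap k H B V W act Sinv coactV) hker) ∧
      -- `T` is right `B`-linear
      (∀ (z : (W ⊗[k] B) ⊗[k] (V ⊗[k] B)) (a : B),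
        ttMap k H B V W act Sinv coactV
            ((TensorProduct.map LinearMap.id
                (TensorProduct.map LinearMap.id (LinearMap.mulRight k a))) z)
          = (TensorProduct.map LinearMap.id (LinearMap.mulRight k a))
              (ttMap k H B V W act Sinv coactV z)) ∧
      -- the inverse is determined by `ξ ⊗ ζ ⊗ a ↦ (ζ ⊗ 1) ⊗ (ξ ⊗ a)`
      (∀ (ξ : V) (ζ : W) (a : B),
        ttMap k H B V W act Sinv coactV ((ζ ⊗ₜ[k] (1 : B)) ⊗ₜ[k] (ξ ⊗ₜ[k] a))
          = (ξ ⊗ₜ[k] ζ) ⊗ₜ[k] a) := by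
  classical
  have hSinvS := hYD.Sinv_antipode
  have hSSinv := hYD.antipode_Sinv
  have hcounit_Sinv : ∀ x : H, Coalgebra.counit (R := k) (Sinv x) = Coalgebra.counit (R := k) x :=
    my_counit_Sinv Sinv hSSinv
  have hcomul_Sinv : ∀ x : H, Coalgebra.comul (R := k) (Sinv x)
      = (TensorProduct.map Sinv Sinv) ((TensorProduct.comm k H H) (Coalgebra.comul (R := k) x)) :=
    my_comul_Sinv Sinv hSinvS hSSinv
  have hmaMap : ∀ (b c : B) (t : H ⊗[k] H),
      maMap k H B act (t ⊗ₜ[k] (b ⊗ₜ[k] c))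
        = LinearMap.mul' k B (TensorProduct.map (act.flip b) (act.flip c) t) := by
    intro b c t
    induction t using TensorProduct.induction_on with
    | zero => simp [maMap]
    | tmul x y => simp [maMap, actT, TensorProduct.tensorTensorTensorComm_tmul]
    | add t₁ t₂ ih₁ ih₂ => simp only [TensorProduct.add_tmul, map_add, ih₁, ih₂]
  have keyB : ∀ (h : H) (b c a : B),
      act (Sinv h) (b * c) * a
        = LinearMap.mul' k B (TensorProduct.map (act.flip b ∘ₗ Sinv)
            ((LinearMap.mulRight k a) ∘ₗ act.flip c ∘ₗ Sinv)
            ((TensorProduct.comm k H H) (Coalgebra.comul (R := k) h))) := by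
    intro h b c a
    have fuse : ∀ t : H ⊗[k] H,
        TensorProduct.map (act.flip b) (act.flip c) (TensorProduct.map Sinv Sinv t)
          = TensorProduct.map (act.flip b ∘ₗ Sinv) (act.flip c ∘ₗ Sinv) t := by
      intro t
      induction t using TensorProduct.induction_on with
      | zero => simp
      | tmul x y => simp
      | add t₁ t₂ ih₁ ih₂ => simp [ih₁, ih₂]
    have mulsh : ∀ t : H ⊗[k] H,
        LinearMap.mul' k B (TensorProduct.map (act.flip b ∘ₗ Sinv) (act.flip c ∘ₗ Sinv) t) * a
          = LinearMap.mul' k B (TensorProduct.map (act.flip b ∘ₗ Sinv)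
              ((LinearMap.mulRight k a) ∘ₗ act.flip c ∘ₗ Sinv) t) := by
      intro t
      induction t using TensorProduct.induction_on with
      | zero => simp
      | tmul x y => simp [mul_assoc]
      | add t₁ t₂ ih₁ ih₂ => simp [add_mul, ih₁, ih₂]
    rw [hYD.act_mul (Sinv h) b c, hmaMap, hcomul_Sinv, fuse, mulsh]
  have main : ∀ (ζ : W) (b : B) (ξ : V) (a c : B),
      ttMap k H B V W act Sinv coactV ((ζ ⊗ₜ[k] (b * c)) ⊗ₜ[k] (ξ ⊗ₜ[k] a))
        = ttMap k H B V W act Sinv coactV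
            ((ζ ⊗ₜ[k] b) ⊗ₜ[k] (pres act Sinv c a (coactV ξ))) := by
    intro ζ b ξ a c
    set Φ : (H ⊗[k] H) ⊗[k] V →ₗ[k] (V ⊗[k] W) ⊗[k] B :=
      TensorProduct.map ((TensorProduct.mk k V W).flip ζ)
          (LinearMap.mul' k B ∘ₗ
            TensorProduct.map (act.flip b ∘ₗ Sinv)
              ((LinearMap.mulRight k a) ∘ₗ act.flip c ∘ₗ Sinv)
            ∘ₗ (TensorProduct.comm k H H).toLinearMap)
        ∘ₗ (TensorProduct.comm k (H ⊗[k] H) V).toLinearMap with hΦ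
    obtain ⟨s, hs⟩ := TensorProduct.exists_finset (R := k) (coactV ξ)
    have hRHS : ttMap k H B V W act Sinv coactV
          ((ζ ⊗ₜ[k] b) ⊗ₜ[k] (pres act Sinv c a (coactV ξ)))
        = ∑ p ∈ s, tres act Sinv ζ b (act (Sinv p.1) c * a) (coactV p.2) := by
      rw [hs]
      simp only [map_sum, TensorProduct.tmul_sum]
      refine Finset.sum_congr rfl (fun p _ => ?_)
      rw [pres_tmul, ttMap_tmul]
    have hLHS1 : ttMap k H B V W act Sinv coactV ((ζ ⊗ₜ[k] (b * c)) ⊗ₜ[k] (ξ ⊗ₜ[k] a))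
        = Φ ((TensorProduct.map (Coalgebra.comul (R := k)) LinearMap.id) (coactV ξ)) := by
      rw [ttMap_tmul, hs]
      simp only [map_sum]
      refine Finset.sum_congr rfl (fun p _ => ?_)
      rw [tres_tmul, keyB p.1 b c a]
      simp [hΦ]
    have hLHS2 : Φ ((TensorProduct.map (Coalgebra.comul (R := k)) LinearMap.id) (coactV ξ))
        = ∑ p ∈ s, Φ ((TensorProduct.assoc k H H V).symm (p.1 ⊗ₜ[k] coactV p.2)) := by
      rw [coactV_coassoc ξ, hs, map_sum]
      simp only [TensorProduct.map_tmul, LinearMap.id_coe, id_eq, map_sum]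
    have hper : ∀ (h : H) (t : H ⊗[k] V),
        Φ ((TensorProduct.assoc k H H V).symm (h ⊗ₜ[k] t))
          = tres act Sinv ζ b (act (Sinv h) c * a) t := by
      intro h t
      induction t using TensorProduct.induction_on with
      | zero => simp
      | tmul g u => simp [hΦ, TensorProduct.assoc_symm_tmul]
      | add t₁ t₂ ih₁ ih₂ =>
          simp only [TensorProduct.tmul_add, LinearEquiv.map_add, map_add, ih₁, ih₂]
    rw [hLHS1, hLHS2, hRHS]
    exact Finset.sum_congr rfl (fun p _ => hper p.1 (coactV p.2))
  have hker : Submodule.span k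
      {z : (W ⊗[k] B) ⊗[k] (V ⊗[k] B) |
        ∃ (w : W ⊗[k] B) (c : B) (v : V ⊗[k] B),
          z = ((TensorProduct.map LinearMap.id (LinearMap.mulRight k c)) w) ⊗ₜ[k] v
              - w ⊗ₜ[k] (piAct k H B V act Sinv coactV c v)}
      ≤ LinearMap.ker (ttMap k H B V W act Sinv coactV) := by
    rw [Submodule.span_le]
    rintro z ⟨w, c, v, rfl⟩
    simp only [SetLike.mem_coe, LinearMap.mem_ker, map_sub, sub_eq_zero]
    induction w using TensorProduct.induction_on with
    | zero => simp
    | tmul ζ b =>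
        induction v using TensorProduct.induction_on with
        | zero => simp
        | tmul ξ a =>
            have hpi : piAct k H B V act Sinv coactV c (ξ ⊗ₜ[k] a)
                = pres act Sinv c a (coactV ξ) := by
              rw [piAct, TensorProduct.curry_apply, piMap_tmul]
            rw [hpi]
            simp only [TensorProduct.map_tmul, LinearMap.id_coe, id_eq,
              LinearMap.mulRight_apply]
            exact main ζ b ξ a c
        | add v₁ v₂ ih₁ ih₂ =>
            simp only [TensorProduct.tmul_add, map_add, ih₁, ih₂]
    | add w₁ w₂ ih₁ ih₂ =>
        simp only [TensorProduct.add_tmul, map_add, TensorProduct.tmul_add, ih₁, ih₂]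
  have bullet4 : ∀ (ξ : V) (ζ : W) (a : B),
      ttMap k H B V W act Sinv coactV ((ζ ⊗ₜ[k] (1 : B)) ⊗ₜ[k] (ξ ⊗ₜ[k] a))
        = (ξ ⊗ₜ[k] ζ) ⊗ₜ[k] a := by
    intro ξ ζ a
    rw [ttMap_tmul]
    have hE : ∀ t : H ⊗[k] V, tres act Sinv ζ (1 : B) a t
        = ((TensorProduct.mk k (V ⊗[k] W) B).flip a)
            (((TensorProduct.mk k V W).flip ζ)
              ((TensorProduct.lid k V)
                ((TensorProduct.map (Coalgebra.counit (R := k)) LinearMap.id) t))) := by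
      intro t
      induction t using TensorProduct.induction_on with
      | zero => simp
      | tmul h v =>
          rw [tres_tmul, hYD.act_one (Sinv h), hcounit_Sinv h]
          simp [smul_mul_assoc, TensorProduct.smul_tmul, TensorProduct.lid_tmul]
      | add t₁ t₂ ih₁ ih₂ =>
          simp only [map_add, LinearEquiv.map_add, ih₁, ih₂]
    rw [hE, coactV_counit ξ]
    simp [TensorProduct.mk_apply]
  have bullet3 : ∀ (z : (W ⊗[k] B) ⊗[k] (V ⊗[k] B)) (a : B),
      ttMap k H B V W act Sinv coactV
          ((TensorProduct.map LinearMap.id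
              (TensorProduct.map LinearMap.id (LinearMap.mulRight k a))) z)
        = (TensorProduct.map LinearMap.id (LinearMap.mulRight k a))
            (ttMap k H B V W act Sinv coactV z) := by
    intro z a
    induction z using TensorProduct.induction_on with
    | zero => simp
    | tmul w v =>
        induction w using TensorProduct.induction_on with
        | zero => simp
        | tmul ζ b =>
            induction v using TensorProduct.induction_on with
            | zero => simp
            | tmul ξ a' =>
                simp only [TensorProduct.map_tmul, LinearMap.id_coe, id_eq,
                  LinearMap.mulRight_apply]
                rw [ttMap_tmul, ttMap_tmul]
                generalize coactV ξ = t
                induction t using TensorProduct.induction_on with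
                | zero => simp
                | tmul h v' => simp [mul_assoc]
                | add t₁ t₂ ih₁ ih₂ => simp only [map_add, ih₁, ih₂]
            | add v₁ v₂ ih₁ ih₂ =>
                simp only [TensorProduct.tmul_add, map_add, ih₁, ih₂]
        | add w₁ w₂ ih₁ ih₂ =>
            simp only [TensorProduct.add_tmul, map_add, ih₁, ih₂]
    | add z₁ z₂ ih₁ ih₂ => simp only [map_add, ih₁, ih₂]
  refine ⟨hker, ?_, bullet3, bullet4⟩
  set Mspan := Submodule.span k
      {z : (W ⊗[k] B) ⊗[k] (V ⊗[k] B) |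
        ∃ (w : W ⊗[k] B) (c : B) (v : V ⊗[k] B),
          z = ((TensorProduct.map LinearMap.id (LinearMap.mulRight k c)) w) ⊗ₜ[k] v
              - w ⊗ₜ[k] (piAct k H B V act Sinv coactV c v)} with hMspan
  set invL : (V ⊗[k] W) ⊗[k] B →ₗ[k] (W ⊗[k] B) ⊗[k] (V ⊗[k] B) :=
    TensorProduct.map ((TensorProduct.mk k W B).flip 1) LinearMap.id
      ∘ₗ (TensorProduct.assoc k W V B).toLinearMap
      ∘ₗ TensorProduct.map (TensorProduct.comm k V W).toLinearMap LinearMap.id with hinvL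
  have hinvL_tmul : ∀ (ξ : V) (ζ : W) (a : B),
      invL ((ξ ⊗ₜ[k] ζ) ⊗ₜ[k] a) = (ζ ⊗ₜ[k] (1 : B)) ⊗ₜ[k] (ξ ⊗ₜ[k] a) := by
    intro ξ ζ a
    simp [hinvL]
  have g1 : ∀ z : (W ⊗[k] B) ⊗[k] (V ⊗[k] B),
      Mspan.mkQ (invL (ttMap k H B V W act Sinv coactV z)) = Mspan.mkQ z := by
    intro z
    induction z using TensorProduct.induction_on with
    | zero => simp
    | tmul w v =>
        induction w using TensorProduct.induction_on with
        | zero => simp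
        | tmul ζ b =>
            induction v using TensorProduct.induction_on with
            | zero => simp
            | tmul ξ a =>
                rw [ttMap_tmul]
                have hL : invL (tres act Sinv ζ b a (coactV ξ))
                    = (ζ ⊗ₜ[k] (1 : B)) ⊗ₜ[k] (pres act Sinv b a (coactV ξ)) := by
                  generalize coactV ξ = t
                  induction t using TensorProduct.induction_on with
                  | zero => simp
                  | tmul h v' => rw [tres_tmul, pres_tmul]; exact hinvL_tmul v' ζ _
                  | add t₁ t₂ ih₁ ih₂ =>
                      simp only [map_add, ih₁, ih₂, TensorProduct.tmul_add]
                rw [hL, ← piMap_tmul act Sinv coactV b ξ a]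
                have hgen : ((TensorProduct.map LinearMap.id (LinearMap.mulRight k b))
                      (ζ ⊗ₜ[k] (1 : B))) ⊗ₜ[k] (ξ ⊗ₜ[k] a)
                    - (ζ ⊗ₜ[k] (1 : B)) ⊗ₜ[k]
                        (piAct k H B V act Sinv coactV b (ξ ⊗ₜ[k] a)) ∈ Mspan :=
                  Submodule.subset_span ⟨ζ ⊗ₜ[k] (1 : B), b, ξ ⊗ₜ[k] a, rfl⟩
                have hpi : piAct k H B V act Sinv coactV b (ξ ⊗ₜ[k] a)
                    = piMap k H B V act Sinv coactV (b ⊗ₜ[k] (ξ ⊗ₜ[k] a)) := by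
                  rw [piAct, TensorProduct.curry_apply]
                rw [hpi] at hgen
                simp only [TensorProduct.map_tmul, LinearMap.id_coe, id_eq,
                  LinearMap.mulRight_apply, one_mul] at hgen
                rw [Submodule.mkQ_apply, Submodule.mkQ_apply, Submodule.Quotient.eq]
                rw [← neg_sub]
                exact Submodule.neg_mem _ hgen
            | add v₁ v₂ ih₁ ih₂ =>
                simp only [TensorProduct.tmul_add, map_add, ih₁, ih₂]
        | add w₁ w₂ ih₁ ih₂ =>
            simp only [TensorProduct.add_tmul, map_add, ih₁, ih₂]
    | add z₁ z₂ ih₁ ih₂ => simp only [map_add, ih₁, ih₂]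
  have right : ∀ y : (V ⊗[k] W) ⊗[k] B,
      Submodule.liftQ Mspan (ttMap k H B V W act Sinv coactV) hker (Mspan.mkQ (invL y)) = y := by
    intro y
    induction y using TensorProduct.induction_on with
    | zero => simp
    | tmul vw a =>
        induction vw using TensorProduct.induction_on with
        | zero => simp [TensorProduct.zero_tmul]
        | tmul ξ ζ =>
            rw [hinvL_tmul, Submodule.mkQ_apply, Submodule.liftQ_apply]
            exact bullet4 ξ ζ a
        | add x₁ x₂ ih₁ ih₂ =>
            simp only [TensorProduct.add_tmul, map_add, ih₁, ih₂]
    | add y₁ y₂ ih₁ ih₂ => simp only [map_add, ih₁, ih₂]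
  constructor
  · intro q₁ q₂ hq
    obtain ⟨z₁, rfl⟩ := Mspan.mkQ_surjective q₁
    obtain ⟨z₂, rfl⟩ := Mspan.mkQ_surjective q₂
    have h1 : ttMap k H B V W act Sinv coactV z₁ = ttMap k H B V W act Sinv coactV z₂ := by
      rw [Submodule.mkQ_apply, Submodule.mkQ_apply, Submodule.liftQ_apply,
        Submodule.liftQ_apply] at hq
      exact hq
    have := congrArg (fun y => Mspan.mkQ (invL y)) h1
    rw [g1 z₁, g1 z₂] at this
    exact this
  · intro y
    exact ⟨Mspan.mkQ (invL y), right y⟩
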